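/- Let φ : ℝ → ℝ be integrable with φ ≥ 0, support contained in [0, ∞), and ∫_ℝ φ < 1, and let ψ := ∑_{k=1}^∞ φ^{⋆k} be the (integrable) sum of the iterated convolutions of φ. Denote by 𝓕f(ξ) = ∫_ℝ f(t) e^{−2πi t ξ} dt the Fourier transform. Then for every ξ ∈ ℝ one has 𝓕φ(ξ) ≠ 1, and 𝓕ψ(ξ) = 𝓕φ(ξ) / (1 − 𝓕φ(ξ)); equivalently, 1 + 𝓕ψ(ξ) ≠ 0 and 𝓕φ(ξ) = 𝓕ψ(ξ) (1 + 𝓕ψ(ξ))^{-1}. -/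

import Mathlib

open MeasureTheory
open scoped FourierTransform Real Convolution ENNReal NNReal

/-- The convolution `(u ⋆ v)(t) = ∫_ℝ u(t - s) v(s) ds`. -/
noncomputable def conv (u v : ℝ → ℝ) : ℝ → ℝ := fun t => ∫ s : ℝ, u (t - s) * v s

lemma conv_eq_convolution (u v : ℝ → ℝ) :
    conv u v = convolution v u (ContinuousLinearMap.mul ℝ ℝ) volume := by
  funext t
  simp only [conv, convolution, ContinuousLinearMap.mul_apply']
  exact integral_congr_ae (Filter.Eventually.of_forall fun s => mul_comm _ _)

lemma conv_integrable {u v : ℝ → ℝ} (hu : Integrable u) (hv : Integrable v) :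
    Integrable (conv u v) := by
  rw [conv_eq_convolution]
  exact hv.integrable_convolution (ContinuousLinearMap.mul ℝ ℝ) hu

lemma conv_integral {u v : ℝ → ℝ} (hu : Integrable u) (hv : Integrable v) :
    (∫ t, conv u v t) = (∫ t, u t) * (∫ t, v t) := by
  rw [conv_eq_convolution]
  rw [integral_convolution (ContinuousLinearMap.mul ℝ ℝ) hv hu]
  simp [mul_comm]

lemma conv_nonneg' {u v : ℝ → ℝ} (hu : ∀ t, 0 ≤ u t) (hv : ∀ t, 0 ≤ v t) (t : ℝ) :
    0 ≤ conv u v t :=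
  integral_nonneg fun s => mul_nonneg (hu _) (hv _)


noncomputable def eK (ξ : ℝ) : ℝ → ℂ := fun t => Complex.exp ((-2 * π * t * ξ : ℝ) * Complex.I)

lemma eK_norm (ξ t : ℝ) : ‖eK ξ t‖ = 1 := by
  rw [eK, Complex.norm_exp_ofReal_mul_I]

lemma eK_add (ξ t s : ℝ) : eK ξ (t + s) = eK ξ t * eK ξ s := by
  simp only [eK, ← Complex.exp_add]
  congr 1
  push_cast
  ring

lemma eK_continuous (ξ : ℝ) : Continuous (eK ξ) := by
  apply Complex.continuous_exp.comp
  fun_prop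

lemma fourier_eq (f : ℝ → ℂ) (ξ : ℝ) : 𝓕 f ξ = ∫ t, eK ξ t * f t := by
  rw [Real.fourier_real_eq_integral_exp_smul]
  simp [eK, smul_eq_mul]

lemma fourier_shift {u : ℝ → ℝ} (ξ s : ℝ) :
    (∫ t, eK ξ t * (u (t - s) : ℂ)) = eK ξ s * ∫ t, eK ξ t * (u t : ℂ) := by
  have hshift := MeasureTheory.integral_add_right_eq_self (μ := volume)
    (fun t => eK ξ t * (u (t - s) : ℂ)) s
  simp only [add_sub_cancel_right, eK_add] at hshift
  rw [← hshift]
  have h : ∀ t : ℝ, eK ξ t * eK ξ s * (u t : ℂ) = eK ξ s * (eK ξ t * (u t : ℂ)) :=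
    fun t => by ring
  simp_rw [h, integral_const_mul]

lemma fourier_conv {u v : ℝ → ℝ} (hu : Integrable u) (hv : Integrable v) (ξ : ℝ) :
    𝓕 (fun t => ((conv u v) t : ℂ)) ξ
      = 𝓕 (fun t => (u t : ℂ)) ξ * 𝓕 (fun t => (v t : ℂ)) ξ := by
  have hU : Integrable (fun t => (u t : ℂ)) := hu.ofReal
  have hV : Integrable (fun t => (v t : ℂ)) := hv.ofReal
  have hconv : ∀ t : ℝ, ((conv u v t : ℝ) : ℂ) = ∫ s, (u (t - s) : ℂ) * (v s : ℂ) := by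
    intro t
    have h1 : ((conv u v t : ℝ) : ℂ) = ∫ s, ((u (t - s) * v s : ℝ) : ℂ) :=
      (integral_ofReal (𝕜 := ℂ)).symm
    rw [h1]
    exact integral_congr_ae (Filter.Eventually.of_forall fun s => by push_cast; ring)
  have hprod : Integrable (fun p : ℝ × ℝ => eK ξ p.1 * ((u (p.1 - p.2) : ℂ) * (v p.2 : ℂ)))
      (volume.prod volume) := by
    have h0 : Integrable (fun p : ℝ × ℝ =>
        (ContinuousLinearMap.mul ℂ ℂ) ((v p.2 : ℂ)) ((u (p.1 - p.2) : ℂ))) (volume.prod volume) :=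
      hV.convolution_integrand (ContinuousLinearMap.mul ℂ ℂ) hU
    simp only [ContinuousLinearMap.mul_apply'] at h0
    have h1 : Integrable (fun p : ℝ × ℝ =>
        eK ξ p.1 * ((v p.2 : ℂ) * (u (p.1 - p.2) : ℂ))) (volume.prod volume) := by
      apply h0.bdd_mul
      · exact ((eK_continuous ξ).comp continuous_fst).aestronglyMeasurable
      · exact Filter.Eventually.of_forall fun p => le_of_eq (eK_norm ξ p.1)
    refine h1.congr (Filter.Eventually.of_forall fun p => by ring)
  have step1 : 𝓕 (fun t => ((conv u v) t : ℂ)) ξ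
      = ∫ t, ∫ s, eK ξ t * ((u (t - s) : ℂ) * (v s : ℂ)) := by
    rw [fourier_eq]
    simp_rw [hconv, ← integral_const_mul]
  rw [step1, integral_integral_swap hprod]
  have h2 : ∀ s t : ℝ, eK ξ t * ((u (t - s) : ℂ) * (v s : ℂ))
      = (eK ξ t * (u (t - s) : ℂ)) * (v s : ℂ) := fun s t => by ring
  simp_rw [h2, integral_mul_const, fourier_shift, fourier_eq]
  have h3 : ∀ s : ℝ, (eK ξ s * ∫ t, eK ξ t * (u t : ℂ)) * (v s : ℂ)
      = (∫ t, eK ξ t * (u t : ℂ)) * (eK ξ s * (v s : ℂ)) := fun s => by ring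
  simp_rw [h3, integral_const_mul]

/-- Iterated convolutions: `iterConv f 1 = f^{⋆1} = f` and
`iterConv f (k+1) = f^{⋆(k+1)} = f ⋆ f^{⋆k}` (the value at `0` is a junk value). -/
noncomputable def iterConv (f : ℝ → ℝ) : ℕ → ℝ → ℝ
  | 0 => fun _ => 0
  | 1 => f
  | (k + 2) => conv f (iterConv f (k + 1))

lemma iterConv_props {φ : ℝ → ℝ} (hφ_int : Integrable φ) (hφ_nonneg : ∀ t, 0 ≤ φ t) :
    ∀ n : ℕ, Integrable (iterConv φ (n + 1)) ∧ (∀ t, 0 ≤ iterConv φ (n + 1) t) ∧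
      (∫ t, iterConv φ (n + 1) t) = (∫ t, φ t) ^ (n + 1) := by
  intro n
  induction n with
  | zero => exact ⟨hφ_int, hφ_nonneg, by simp [iterConv]⟩
  | succ k ih =>
    obtain ⟨hint, hnn, hI⟩ := ih
    have h1 : iterConv φ (k + 2) = conv φ (iterConv φ (k + 1)) := rfl
    refine ⟨h1 ▸ conv_integrable hφ_int hint, h1 ▸ conv_nonneg' hφ_nonneg hnn, ?_⟩
    rw [h1, conv_integral hφ_int hint, hI]
    ring

lemma iterConv_fourier {φ : ℝ → ℝ} (hφ_int : Integrable φ) (hφ_nonneg : ∀ t, 0 ≤ φ t)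
    (ξ : ℝ) : ∀ n : ℕ, 𝓕 (fun t => (iterConv φ (n + 1) t : ℂ)) ξ
      = (𝓕 (fun t => (φ t : ℂ)) ξ) ^ (n + 1) := by
  intro n
  induction n with
  | zero => simp [iterConv]
  | succ k ih =>
    have h1 : iterConv φ (k + 2) = conv φ (iterConv φ (k + 1)) := rfl
    rw [h1, fourier_conv hφ_int (iterConv_props hφ_int hφ_nonneg k).1, ih]
    ring

/-- For an integrable, nonnegative, causal kernel `φ` with `∫ φ < 1`, and the dressed kernel
`ψ = ∑_{k≥1} φ^{⋆k}`, the Fourier transforms (with kernel `e^{-2πi t ξ}`) satisfy, for every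
`ξ ∈ ℝ`: `𝓕φ(ξ) ≠ 1`, `𝓕ψ(ξ) = 𝓕φ(ξ)/(1 - 𝓕φ(ξ))`, `1 + 𝓕ψ(ξ) ≠ 0`, and
`𝓕φ(ξ) = 𝓕ψ(ξ)(1 + 𝓕ψ(ξ))⁻¹`. -/
theorem fourier_transform_dressed_kernel
    (φ : ℝ → ℝ) (hφ_int : Integrable φ) (hφ_nonneg : ∀ t, 0 ≤ φ t)
    (hφ_causal : ∀ t < (0 : ℝ), φ t = 0) (hφ_norm : (∫ t : ℝ, φ t) < 1)
    (ψ : ℝ → ℝ) (hψ : ψ = fun t => ∑' k : ℕ, iterConv φ (k + 1) t) :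
    ∀ ξ : ℝ,
      𝓕 (fun t => (φ t : ℂ)) ξ ≠ 1 ∧
      𝓕 (fun t => (ψ t : ℂ)) ξ
        = 𝓕 (fun t => (φ t : ℂ)) ξ / (1 - 𝓕 (fun t => (φ t : ℂ)) ξ) ∧
      1 + 𝓕 (fun t => (ψ t : ℂ)) ξ ≠ 0 ∧
      𝓕 (fun t => (φ t : ℂ)) ξ
        = 𝓕 (fun t => (ψ t : ℂ)) ξ * (1 + 𝓕 (fun t => (ψ t : ℂ)) ξ)⁻¹ := by
  intro ξ
  set a : ℝ := ∫ t, φ t with ha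
  have ha0 : 0 ≤ a := integral_nonneg hφ_nonneg
  set F : ℂ := 𝓕 (fun t => (φ t : ℂ)) ξ with hFdef
  -- ‖F‖ < 1
  have hFnorm : ‖F‖ < 1 := by
    have h1 : ‖F‖ ≤ ∫ t, ‖(φ t : ℂ)‖ :=
      VectorFourier.norm_fourierIntegral_le_integral_norm _ _ _ _ _
    have h2 : (∫ t, ‖(φ t : ℂ)‖) = a := by
      rw [ha]
      exact integral_congr_ae (Filter.Eventually.of_forall fun t => by
        simp [Complex.norm_real, abs_of_nonneg (hφ_nonneg t)])
    exact lt_of_le_of_lt (h2 ▸ h1) hφ_norm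
  have hFne1 : F ≠ 1 := fun h => by simp [h] at hFnorm
  have h1F : (1 : ℂ) - F ≠ 0 := sub_ne_zero.mpr (Ne.symm hFne1)
  -- properties of the iterated convolutions
  have hP := iterConv_props hφ_int hφ_nonneg
  have hgeom : Summable (fun k : ℕ => a ^ (k + 1)) := by
    have := (summable_geometric_of_lt_one ha0 hφ_norm)
    exact (summable_nat_add_iff 1).mpr this
  -- Fourier transform of ψ
  have key : 𝓕 (fun t => (ψ t : ℂ)) ξ = ∑' k : ℕ, F ^ (k + 1) := by
    have hmeas : ∀ k : ℕ, AEStronglyMeasurable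
        (fun t => eK ξ t * (iterConv φ (k + 1) t : ℂ)) volume := fun k =>
      (eK_continuous ξ).aestronglyMeasurable.mul
        (Complex.continuous_ofReal.comp_aestronglyMeasurable (hP k).1.aestronglyMeasurable)
    have hnn : ∀ k : ℕ, ∀ t : ℝ, 0 ≤ iterConv φ (k + 1) t := fun k => (hP k).2.1
    have hlin : ∀ k : ℕ, (∫⁻ t, ENNReal.ofReal (iterConv φ (k + 1) t))
        = ENNReal.ofReal (a ^ (k + 1)) := by
      intro k
      rw [← ofReal_integral_eq_lintegral_ofReal (hP k).1 (ae_of_all _ (hnn k)), (hP k).2.2]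
    have htop : (∑' k : ℕ, ENNReal.ofReal (a ^ (k + 1))) ≠ ⊤ := by
      rw [← ENNReal.ofReal_tsum_of_nonneg (fun k => pow_nonneg ha0 _) hgeom]
      exact ENNReal.ofReal_ne_top
    have hameas : ∀ k : ℕ, AEMeasurable
        (fun t => ENNReal.ofReal (iterConv φ (k + 1) t)) volume := fun k =>
      ENNReal.measurable_ofReal.comp_aemeasurable (hP k).1.aestronglyMeasurable.aemeasurable
    have hsummable : ∀ᵐ t : ℝ, Summable (fun k : ℕ => iterConv φ (k + 1) t) := by
      have hlt : ∀ᵐ t : ℝ, (∑' k : ℕ, ENNReal.ofReal (iterConv φ (k + 1) t)) < ⊤ := by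
        refine ae_lt_top' (AEMeasurable.ennreal_tsum hameas) ?_
        rw [lintegral_tsum hameas]
        simpa [hlin] using htop
      filter_upwards [hlt] with t ht
      have := ENNReal.summable_toReal ht.ne
      refine this.congr fun k => ?_
      rw [ENNReal.toReal_ofReal (hnn k t)]
    have hcongr : (fun t => eK ξ t * ((ψ t : ℝ) : ℂ))
        =ᵐ[volume] fun t => ∑' k : ℕ, eK ξ t * (iterConv φ (k + 1) t : ℂ) := by
      filter_upwards [hsummable] with t ht
      rw [hψ]
      simp only []
      rw [Complex.ofReal_tsum, ← tsum_mul_left]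
    have hnrm : ∀ k : ℕ, ∀ t : ℝ, (‖eK ξ t * (iterConv φ (k + 1) t : ℂ)‖₊ : ℝ≥0∞)
        = ENNReal.ofReal (iterConv φ (k + 1) t) := by
      intro k t
      rw [← enorm_eq_nnnorm, ← ofReal_norm_eq_enorm, norm_mul, eK_norm, one_mul, Complex.norm_real,
        Real.norm_eq_abs, abs_of_nonneg (hnn k t)]
    have hfin : (∑' k : ℕ, ∫⁻ t, ‖eK ξ t * (iterConv φ (k + 1) t : ℂ)‖₊) ≠ ⊤ := by
      have heq : (∑' k : ℕ, ∫⁻ t, ‖eK ξ t * (iterConv φ (k + 1) t : ℂ)‖₊)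
          = ∑' k : ℕ, ENNReal.ofReal (a ^ (k + 1)) :=
        tsum_congr fun k => (lintegral_congr fun t => hnrm k t).trans (hlin k)
      rw [heq]
      exact htop
    rw [fourier_eq, integral_congr_ae hcongr, integral_tsum hmeas hfin]
    refine tsum_congr fun k => ?_
    rw [← fourier_eq, iterConv_fourier hφ_int hφ_nonneg ξ k]
  -- geometric series
  have htsumF : (∑' k : ℕ, F ^ (k + 1)) = F * (1 - F)⁻¹ := by
    simp_rw [pow_succ]
    rw [tsum_mul_right, tsum_geometric_of_norm_lt_one hFnorm]
    ring
  have hψF : 𝓕 (fun t => (ψ t : ℂ)) ξ = F / (1 - F) := by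
    rw [key, htsumF, div_eq_mul_inv]
  have h1plus : 1 + 𝓕 (fun t => (ψ t : ℂ)) ξ = (1 - F)⁻¹ := by
    rw [hψF]
    field_simp
    ring
  refine ⟨hFne1, hψF, ?_, ?_⟩
  · rw [h1plus]
    exact inv_ne_zero h1F
  · rw [h1plus, hψF, inv_inv, div_mul_cancel₀ _ h1F]
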